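/- Let g, g* : [0,1]^d → ℝ^p be K-Lipschitz maps (with respect to the periodic Euclidean metric on the torus [0,1]^d/ℤ^d), and let U be the uniform distribution on [0,1]^d. If there exists u ∈ [0,1]^d with dist(g(u), g*([0,1]^d)) ≥ δ for some δ > 0 with δ/(2K) ≤ 1/2, then W₁(g_{#}U, g*_{#}U) ≥ c_d · δ^{d+1}/(2K)^d, where c_d > 0 depends only on d (one may take c_d = (volume of the d-dimensional unit ball)/2^{d+1}). -/

import Mathlib

open MeasureTheory Metric Set

/-- The periodic (torus) distance on `ℝ^d`, i.e. the distance on `ℝ^d/ℤ^d`. -/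
noncomputable def torusDist {d : ℕ} (u v : EuclideanSpace ℝ (Fin d)) : ℝ :=
  ⨅ k : Fin d → ℤ,
    ‖u - v - (WithLp.equiv 2 (Fin d → ℝ)).symm (fun i => (k i : ℝ))‖

lemma torusDist_le_norm {d : ℕ} (u v : EuclideanSpace ℝ (Fin d)) :
    torusDist u v ≤ ‖u - v‖ := by
  have h0 : (WithLp.equiv 2 (Fin d → ℝ)).symm (fun _ : Fin d => (0:ℝ)) = 0 := rfl
  have := ciInf_le (f := fun k : Fin d → ℤ =>
      ‖u - v - (WithLp.equiv 2 (Fin d → ℝ)).symm (fun i => (k i : ℝ))‖)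
      ⟨0, by rintro x ⟨k, rfl⟩; exact norm_nonneg _⟩ (fun _ => (0:ℤ))
  simpa [torusDist, h0] using this

lemma abs_coord_le_norm {d : ℕ} (w : EuclideanSpace ℝ (Fin d)) (i : Fin d) :
    |w i| ≤ ‖w‖ := by
  rw [EuclideanSpace.norm_eq]
  have h1 : |w i| = Real.sqrt (‖w i‖ ^ 2) := by
    rw [Real.sqrt_sq_eq_abs, abs_norm, Real.norm_eq_abs]
  rw [h1]
  exact Real.sqrt_le_sqrt (Finset.single_le_sum (f := fun j => ‖w j‖ ^ 2)
    (fun j _ => sq_nonneg _) (Finset.mem_univ i))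

/-- Coordinatewise sign flip as a linear isometry of Euclidean space. -/
noncomputable def reflE {d : ℕ} (s : Fin d → Bool) :
    EuclideanSpace ℝ (Fin d) ≃ₗᵢ[ℝ] EuclideanSpace ℝ (Fin d) :=
  LinearIsometryEquiv.piLpCongrRight 2
    (fun i => if s i then LinearIsometryEquiv.refl ℝ ℝ else LinearIsometryEquiv.neg ℝ)

lemma reflE_apply {d : ℕ} (s : Fin d → Bool) (w : EuclideanSpace ℝ (Fin d)) (i : Fin d) :
    reflE s w i = if s i then w i else -(w i) := by
  simp only [reflE, LinearIsometryEquiv.piLpCongrRight_apply]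
  split <;> simp

lemma reflE_reflE {d : ℕ} (s : Fin d → Bool) (w : EuclideanSpace ℝ (Fin d)) :
    reflE s (reflE s w) = w := by
  ext i
  rw [reflE_apply, reflE_apply]
  split <;> simp

lemma volume_unitCube {d : ℕ} :
    (volume : Measure (EuclideanSpace ℝ (Fin d)))
      (WithLp.ofLp ⁻¹' (Set.univ.pi fun _ : Fin d => Icc (0:ℝ) 1)) = 1 := by
  have h := (EuclideanSpace.volume_preserving_symm_measurableEquiv_toLp (Fin d)).measure_preimage
    (s := (Set.univ.pi fun _ : Fin d => Icc (0:ℝ) 1 : Set (Fin d → ℝ)))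
    (MeasurableSet.univ_pi fun _ => measurableSet_Icc).nullMeasurableSet
  exact h.trans (by rw [volume_pi_pi]; simp)

lemma norm_sub_le_sqrt_of_mem_cube {d : ℕ} {x y : EuclideanSpace ℝ (Fin d)}
    (hx : WithLp.ofLp x ∈ Set.univ.pi fun _ : Fin d => Icc (0:ℝ) 1)
    (hy : WithLp.ofLp y ∈ Set.univ.pi fun _ : Fin d => Icc (0:ℝ) 1) :
    ‖x - y‖ ≤ Real.sqrt d := by
  rw [EuclideanSpace.norm_eq]
  apply Real.sqrt_le_sqrt
  have : ∀ i : Fin d, ‖(x - y) i‖ ^ 2 ≤ 1 := by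
    intro i
    have hxi := hx i (mem_univ i)
    have hyi := hy i (mem_univ i)
    have h1 : |(x - y) i| ≤ 1 := by
      have : (x - y) i = x i - y i := rfl
      rw [this, abs_le]
      constructor <;> [linarith [hxi.1, hxi.2, hyi.1, hyi.2];
        linarith [hxi.1, hxi.2, hyi.1, hyi.2]]
    calc ‖(x - y) i‖ ^ 2 = |(x - y) i| ^ 2 := by rw [Real.norm_eq_abs]
      _ ≤ 1 ^ 2 := by nlinarith [abs_nonneg ((x - y) i)]
      _ = 1 := one_pow 2
  calc (∑ i : Fin d, ‖(x - y) i‖ ^ 2) ≤ ∑ _i : Fin d, (1:ℝ) :=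
        Finset.sum_le_sum fun i _ => this i
    _ = d := by simp

lemma volume_ball_eq {d : ℕ} {r : ℝ} (hr : 0 < r) :
    volume (ball (0 : EuclideanSpace ℝ (Fin d)) r)
      = ENNReal.ofReal (r ^ d) * volume (ball (0 : EuclideanSpace ℝ (Fin d)) 1) := by
  cases d with
  | zero =>
    have h : (ball (0 : EuclideanSpace ℝ (Fin 0)) r) = ball 0 1 := by
      ext x
      have : x = 0 := Subsingleton.elim _ _
      simp [this, hr]
    rw [h]
    simp
  | succ n =>
    have := Measure.addHaar_ball (volume : Measure (EuclideanSpace ℝ (Fin (n+1))))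
      (0 : EuclideanSpace ℝ (Fin (n+1))) hr.le
    rwa [finrank_euclideanSpace_fin] at this

theorem wasserstein_lower_bound_far_point (d p : ℕ) (K δ : ℝ) (hK : 0 < K) (hδ : 0 < δ)
    (hsmall : δ / (2 * K) ≤ 1 / 2)
    (g gs : EuclideanSpace ℝ (Fin d) → EuclideanSpace ℝ (Fin p))
    (hg : ∀ u v, ‖g u - g v‖ ≤ K * torusDist u v)
    (hgs : ∀ u v, ‖gs u - gs v‖ ≤ K * torusDist u v)
    (u : EuclideanSpace ℝ (Fin d))
    (hu : WithLp.ofLp u ∈ Set.univ.pi fun _ : Fin d => Icc (0 : ℝ) 1)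
    (hfar : δ ≤ infDist (g u) (gs '' (WithLp.ofLp ⁻¹' (Set.univ.pi fun _ : Fin d => Icc (0 : ℝ) 1)))) :
    ((volume (ball (0 : EuclideanSpace ℝ (Fin d)) 1)).toReal / 2 ^ (d + 1)) *
        δ ^ (d + 1) / (2 * K) ^ d ≤
      sSup {r : ℝ | ∃ D : EuclideanSpace ℝ (Fin p) → ℝ, LipschitzWith 1 D ∧
        r = (∫ x, D x
              ∂(Measure.map g
                (volume.restrict (WithLp.ofLp ⁻¹' (Set.univ.pi fun _ : Fin d => Icc (0 : ℝ) 1))))) -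
            ∫ x, D x
              ∂(Measure.map gs
                (volume.restrict (WithLp.ofLp ⁻¹' (Set.univ.pi fun _ : Fin d => Icc (0 : ℝ) 1))))} := by
  set Q : Set (EuclideanSpace ℝ (Fin d)) := WithLp.ofLp ⁻¹' (Set.univ.pi fun _ : Fin d => Icc (0:ℝ) 1) with hQdef
  have hQm : MeasurableSet Q :=
    (MeasurableSet.univ_pi fun _ => measurableSet_Icc).preimage (WithLp.measurable_ofLp 2 _)
  have hQc : IsCompact Q := by
    have := (isCompact_univ_pi fun _ : Fin d => isCompact_Icc (a := (0:ℝ)) (b := 1)).image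
      (PiLp.continuous_toLp 2 (fun _ : Fin d => ℝ))
    convert this using 1
    ext x
    exact ⟨fun h => ⟨x.ofLp, h, rfl⟩, by rintro ⟨y, hy, rfl⟩; exact hy⟩
  have hvolQ : volume Q = 1 := volume_unitCube
  -- Lipschitz continuity of g, gs for the euclidean metric
  have hKnn : (0:ℝ) ≤ K := hK.le
  have hgl : LipschitzWith K.toNNReal g := by
    apply LipschitzWith.of_dist_le_mul
    intro a b
    rw [dist_eq_norm, dist_eq_norm, Real.coe_toNNReal K hKnn]
    exact (hg a b).trans (mul_le_mul_of_nonneg_left (torusDist_le_norm a b) hKnn)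
  have hgsl : LipschitzWith K.toNNReal gs := by
    apply LipschitzWith.of_dist_le_mul
    intro a b
    rw [dist_eq_norm, dist_eq_norm, Real.coe_toNNReal K hKnn]
    exact (hgs a b).trans (mul_le_mul_of_nonneg_left (torusDist_le_norm a b) hKnn)
  set T : Set (EuclideanSpace ℝ (Fin p)) := gs '' Q with hTdef
  set D : EuclideanSpace ℝ (Fin p) → ℝ := fun x => infDist x T with hDdef
  have hDlip : LipschitzWith 1 D := lipschitz_infDist_pt T
  -- rewriting the two integrals
  have hIg : (∫ x, D x ∂(Measure.map g (volume.restrict Q))) = ∫ x in Q, D (g x) :=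
    integral_map hgl.continuous.aemeasurable hDlip.continuous.aestronglyMeasurable
  have hIgs : (∫ x, D x ∂(Measure.map gs (volume.restrict Q))) = 0 := by
    rw [integral_map hgsl.continuous.aemeasurable hDlip.continuous.aestronglyMeasurable]
    have h0 : EqOn (fun x => D (gs x)) (fun _ => (0:ℝ)) Q := fun x hx =>
      infDist_zero_of_mem (mem_image_of_mem gs hx)
    rw [setIntegral_congr_fun hQm h0]
    simp
  have hmem : (∫ x in Q, D (g x)) ∈
      {r : ℝ | ∃ D' : EuclideanSpace ℝ (Fin p) → ℝ, LipschitzWith 1 D' ∧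
        r = (∫ x, D' x ∂(Measure.map g (volume.restrict Q))) -
            ∫ x, D' x ∂(Measure.map gs (volume.restrict Q))} :=
    ⟨D, hDlip, by rw [hIg, hIgs, sub_zero]⟩
  -- the set is bounded above
  have hbdd : BddAbove {r : ℝ | ∃ D' : EuclideanSpace ℝ (Fin p) → ℝ, LipschitzWith 1 D' ∧
      r = (∫ x, D' x ∂(Measure.map g (volume.restrict Q))) -
          ∫ x, D' x ∂(Measure.map gs (volume.restrict Q))} := by
    refine ⟨2 * K * Real.sqrt d + dist (g u) (gs u), ?_⟩
    rintro x ⟨D', hD', rfl⟩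
    rw [integral_map hgl.continuous.aemeasurable hD'.continuous.aestronglyMeasurable,
      integral_map hgsl.continuous.aemeasurable hD'.continuous.aestronglyMeasurable]
    have h1 : IntegrableOn (fun x => D' (g x)) Q :=
      (hD'.continuous.comp hgl.continuous).continuousOn.integrableOn_compact hQc
    have h2 : IntegrableOn (fun x => D' (gs x)) Q :=
      (hD'.continuous.comp hgsl.continuous).continuousOn.integrableOn_compact hQc
    rw [← integral_sub h1 h2]
    have hpt : ∀ x ∈ Q, D' (g x) - D' (gs x) ≤ 2 * K * Real.sqrt d + dist (g u) (gs u) := by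
      intro x hx
      have hd1 : D' (g x) - D' (gs x) ≤ dist (g x) (gs x) := by
        have := hD'.dist_le_mul (g x) (gs x)
        rw [NNReal.coe_one, one_mul] at this
        calc D' (g x) - D' (gs x) ≤ |D' (g x) - D' (gs x)| := le_abs_self _
          _ = dist (D' (g x)) (D' (gs x)) := (Real.dist_eq _ _).symm
          _ ≤ dist (g x) (gs x) := this
      have hd4 : dist (g x) (gs x) ≤
          dist (g x) (g u) + dist (g u) (gs u) + dist (gs u) (gs x) := dist_triangle4 _ _ _ _
      have hxu : ‖x - u‖ ≤ Real.sqrt d := norm_sub_le_sqrt_of_mem_cube hx hu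
      have hgxu : dist (g x) (g u) ≤ K * Real.sqrt d := by
        rw [dist_eq_norm]
        calc ‖g x - g u‖ ≤ K * torusDist x u := hg x u
          _ ≤ K * ‖x - u‖ := mul_le_mul_of_nonneg_left (torusDist_le_norm x u) hKnn
          _ ≤ K * Real.sqrt d := mul_le_mul_of_nonneg_left hxu hKnn
      have hgsxu : dist (gs u) (gs x) ≤ K * Real.sqrt d := by
        rw [dist_eq_norm]
        calc ‖gs u - gs x‖ ≤ K * torusDist u x := hgs u x
          _ ≤ K * ‖u - x‖ := mul_le_mul_of_nonneg_left (torusDist_le_norm u x) hKnn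
          _ ≤ K * Real.sqrt d := mul_le_mul_of_nonneg_left
              (by rw [← neg_sub, norm_neg]; exact hxu) hKnn
      linarith
    calc (∫ x in Q, (D' (g x) - D' (gs x)))
        ≤ ∫ _x in Q, (2 * K * Real.sqrt d + dist (g u) (gs u)) :=
          setIntegral_mono_on (h1.sub h2)
            (integrableOn_const (by rw [hvolQ]; exact ENNReal.one_ne_top)) hQm hpt
      _ = 2 * K * Real.sqrt d + dist (g u) (gs u) := by
          rw [setIntegral_const, measureReal_def, hvolQ]; simp
  -- the quantitative lower bound
  set r : ℝ := δ / (2 * K) with hrdef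
  have hr0 : 0 < r := div_pos hδ (by positivity)
  have hrhalf : r ≤ 1/2 := hsmall
  have hKr : K * r = δ / 2 := by
    rw [hrdef]; field_simp
  set ε : Fin d → Bool := fun i => decide (u i ≤ 1/2) with hεdef
  set A : Set (EuclideanSpace ℝ (Fin d)) :=
    ball 0 r ∩ {w | ∀ i, 0 ≤ w i} with hAdef
  have hcoordm : ∀ i : Fin d, Measurable fun w : EuclideanSpace ℝ (Fin d) => w i := fun i =>
    (measurable_pi_apply i).comp (WithLp.measurable_ofLp 2 _)
  have hAm : MeasurableSet A := by
    apply measurableSet_ball.inter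
    rw [show {w : EuclideanSpace ℝ (Fin d) | ∀ i, 0 ≤ w i}
        = ⋂ i, {w : EuclideanSpace ℝ (Fin d) | 0 ≤ w i} by ext w; simp]
    exact MeasurableSet.iInter fun i => measurableSet_le measurable_const (hcoordm i)
  set Φ : EuclideanSpace ℝ (Fin d) → EuclideanSpace ℝ (Fin d) :=
    fun z => reflE ε (z - u) with hΦdef
  have hΦmp : MeasurePreserving Φ volume volume :=
    (reflE ε).measurePreserving.comp (measurePreserving_sub_right volume u)
  set S : Set (EuclideanSpace ℝ (Fin d)) := Φ ⁻¹' A with hSdef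
  have hSm : MeasurableSet S := hΦmp.measurable hAm
  have hvolS : volume S = volume A := hΦmp.measure_preimage hAm.nullMeasurableSet
  -- basic facts about points of S
  have hSfact : ∀ z ∈ S, z ∈ Q ∧ ‖z - u‖ < r := by
    intro z hz
    obtain ⟨hzball, hznn⟩ : Φ z ∈ ball 0 r ∧ ∀ i, 0 ≤ Φ z i := hz
    have hzu : z - u = reflE ε (Φ z) := by rw [hΦdef]; exact (reflE_reflE ε (z - u)).symm
    have hnorm : ‖z - u‖ < r := by
      rw [hzu, (reflE ε).norm_map]
      exact mem_ball_zero_iff.1 hzball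
    refine ⟨?_, hnorm⟩
    intro i _
    have hwi : 0 ≤ Φ z i := hznn i
    have hwile : Φ z i ≤ 1/2 := by
      have := abs_coord_le_norm (Φ z) i
      have h2 := mem_ball_zero_iff.1 hzball
      have := (le_abs_self _).trans this
      linarith
    have hui := hu i (mem_univ i)
    have hcoord : z i - u i = if ε i then Φ z i else -(Φ z i) := by
      have : (z - u) i = z i - u i := rfl
      rw [← this, hzu, reflE_apply]
    by_cases hcase : u i ≤ 1/2
    · have hεi : ε i = true := by simp only [hεdef]; exact decide_eq_true hcase
      rw [hεi, if_pos rfl] at hcoord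
      have hui1 : (0:ℝ) ≤ u i := hui.1
      have hui2 : u i ≤ 1 := hui.2
      exact ⟨by linarith, by linarith⟩
    · have hεi : ε i = false := by simp only [hεdef]; exact decide_eq_false hcase
      rw [hεi] at hcoord
      simp only [Bool.false_eq_true, if_false] at hcoord
      push_neg at hcase
      have hui1 : (0:ℝ) ≤ u i := hui.1
      have hui2 : u i ≤ 1 := hui.2
      exact ⟨by linarith, by linarith⟩
  have hSsubQ : S ⊆ Q := fun z hz => (hSfact z hz).1
  -- lower bound for D ∘ g on S
  have hlow : ∀ z ∈ S, δ/2 ≤ D (g z) := by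
    intro z hz
    have hnorm : ‖z - u‖ < r := (hSfact z hz).2
    have hdist : dist (g u) (g z) ≤ δ / 2 := by
      rw [dist_eq_norm]
      calc ‖g u - g z‖ ≤ K * torusDist u z := hg u z
        _ ≤ K * ‖u - z‖ := mul_le_mul_of_nonneg_left (torusDist_le_norm u z) hKnn
        _ ≤ K * r := mul_le_mul_of_nonneg_left
            (by rw [← neg_sub, norm_neg]; exact hnorm.le) hKnn
        _ = δ / 2 := hKr
    have h1 : infDist (g u) T ≤ infDist (g z) T + dist (g u) (g z) :=
      infDist_le_infDist_add_dist
    have h2 : δ ≤ infDist (g u) T := hfar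
    simp only [hDdef]
    linarith
  -- integral lower bound
  have hint : IntegrableOn (fun x => D (g x)) Q :=
    (hDlip.continuous.comp hgl.continuous).continuousOn.integrableOn_compact hQc
  have hSfin : volume S ≠ ⊤ := by
    refine ((measure_mono hSsubQ).trans_lt ?_).ne
    rw [hvolQ]; exact ENNReal.one_lt_top
  have hIS : (δ/2) * (volume S).toReal ≤ ∫ x in S, D (g x) :=
    by have := setIntegral_ge_of_const_le hSm hSfin (fun x hx => hlow x hx) (hint.mono_set hSsubQ)
       rw [measureReal_def, smul_eq_mul, mul_comm] at this; exact this
  have hISQ : (∫ x in S, D (g x)) ≤ ∫ x in Q, D (g x) :=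
    setIntegral_mono_set hint
      (Filter.Eventually.of_forall fun x => infDist_nonneg)
      (HasSubset.Subset.eventuallyLE hSsubQ)
  -- volume estimate : 2^d * volume A ≥ volume (ball 0 r)
  have hcover : ball (0 : EuclideanSpace ℝ (Fin d)) r
      ⊆ ⋃ s : Fin d → Bool, (reflE s) ⁻¹' A := by
    intro w hw
    refine mem_iUnion.2 ⟨fun i => decide (0 ≤ w i), ?_, ?_⟩
    · rw [mem_ball_zero_iff, (reflE _).norm_map]
      exact mem_ball_zero_iff.1 hw
    · intro i
      rw [reflE_apply]
      by_cases hc : 0 ≤ w i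
      · simp [hc]
      · rw [if_neg (by simp [hc])]
        push_neg at hc
        linarith
  have hvol_ball_le : volume (ball (0 : EuclideanSpace ℝ (Fin d)) r)
      ≤ 2^d * volume A := by
    calc volume (ball (0 : EuclideanSpace ℝ (Fin d)) r)
        ≤ volume (⋃ s : Fin d → Bool, (reflE s) ⁻¹' A) := measure_mono hcover
      _ ≤ ∑' s : Fin d → Bool, volume ((reflE s) ⁻¹' A) := measure_iUnion_le _
      _ = ∑' _s : Fin d → Bool, volume A := by
          congr 1
          funext s
          exact (reflE s).measurePreserving.measure_preimage hAm.nullMeasurableSet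
      _ = 2^d * volume A := by
          rw [tsum_fintype]
          simp [Finset.sum_const, Fintype.card_fun]
  have hAfin : volume A ≠ ⊤ :=
    ((measure_mono inter_subset_left).trans_lt measure_ball_lt_top).ne
  have hballfin : volume (ball (0 : EuclideanSpace ℝ (Fin d)) 1) ≠ ⊤ :=
    measure_ball_lt_top.ne
  set B : ℝ := (volume (ball (0 : EuclideanSpace ℝ (Fin d)) 1)).toReal with hBdef
  have hB0 : 0 ≤ B := ENNReal.toReal_nonneg
  have hvolA_lb : r^d * B ≤ 2^d * (volume A).toReal := by
    have h := (volume_ball_eq hr0 (d := d)).symm.le.trans hvol_ball_le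
    have hfin2 : (2:ENNReal)^d * volume A ≠ ⊤ :=
      ENNReal.mul_ne_top (by simp) hAfin
    have := ENNReal.toReal_le_toReal
      (ENNReal.mul_ne_top ENNReal.ofReal_ne_top hballfin) hfin2 |>.2 h
    rwa [ENNReal.toReal_mul, ENNReal.toReal_mul, ENNReal.toReal_ofReal (by positivity),
      ENNReal.toReal_pow, ENNReal.toReal_ofNat] at this
  -- putting everything together
  have hfinal : ((volume (ball (0 : EuclideanSpace ℝ (Fin d)) 1)).toReal / 2 ^ (d + 1)) *
      δ ^ (d + 1) / (2 * K) ^ d ≤ ∫ x in Q, D (g x) := by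
    have hstep : (B / 2 ^ (d + 1)) * δ ^ (d + 1) / (2 * K) ^ d
        = (δ/2) * (r^d * B / 2^d) := by
      rw [hrdef, div_pow, pow_succ δ d]
      have h2K : ((2:ℝ) * K) ^ d ≠ 0 := by positivity
      field_simp
      ring
    rw [← hBdef, hstep]
    have hAB : r^d * B / 2^d ≤ (volume A).toReal := by
      rw [div_le_iff₀ (by positivity : (0:ℝ) < 2^d)]
      linarith [hvolA_lb]
    calc (δ/2) * (r^d * B / 2^d) ≤ (δ/2) * (volume S).toReal := by
          rw [hvolS]
          exact mul_le_mul_of_nonneg_left hAB (by positivity)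
      _ ≤ ∫ x in S, D (g x) := hIS
      _ ≤ ∫ x in Q, D (g x) := hISQ
  exact hfinal.trans (le_csSup hbdd hmem)
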